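/- (Cauchy–Binet preservation) Let B be an n×n matrix that is SR_k(ε) (every nonzero r×r minor has sign ε_r for 1 ≤ r ≤ k) and has rank at least k, and let F be an n×n totally positive matrix (all minors strictly positive). Then A := F·B·F is SSR_k(ε): every r×r minor of A is nonzero with sign ε_r, for 1 ≤ r ≤ k. -/

import Mathlib

open Matrix Filter

/-- Number of sign changes in a list of reals (consecutive pairs with negative product). -/
noncomputable def signChanges (l : List ℝ) : ℕ :=
  (l.zip l.tail).countP (fun p => decide (p.1 * p.2 < 0))

/-- `S^-(v)`: sign changes of the coordinates of `v` after discarding zero entries. -/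
noncomputable def Sm {n : ℕ} (v : Fin n → ℝ) : ℕ :=
  signChanges ((List.ofFn v).filter (fun x => decide (x ≠ 0)))

/-- `S^+(v)`: maximal number of sign changes over all ±1 completions of the zero
entries of `v`, with the convention `S^+(0) = n`. -/
noncomputable def Sp {n : ℕ} (v : Fin n → ℝ) : ℕ :=
  if v = 0 then n
  else Finset.univ.sup (fun σ : Fin n → Bool =>
    signChanges (List.ofFn (fun i => if v i = 0 then (if σ i then (1:ℝ) else -1) else v i)))

/-- First nonzero entry of a vector (`0` if the vector is zero). -/
noncomputable def firstNz {n : ℕ} (v : Fin n → ℝ) : ℝ :=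
  ((List.ofFn v).filter (fun x => decide (x ≠ 0))).headI

/-- `A` is strictly sign regular with sign pattern `ε`:
every `r × r` minor (`1 ≤ r ≤ min m n`) is nonzero with sign `ε r`. -/
def ssrPattern {m n : ℕ} (A : Matrix (Fin m) (Fin n) ℝ) (ε : ℕ → ℝ) : Prop :=
  ∀ r : ℕ, 1 ≤ r → r ≤ min m n → ∀ (f : Fin r → Fin m) (g : Fin r → Fin n),
    StrictMono f → StrictMono g → 0 < ε r * (A.submatrix f g).det

/-- `A` is sign regular with sign pattern `ε`:
every nonzero `r × r` minor (`1 ≤ r ≤ min m n`) has sign `ε r`. -/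
def srPattern {m n : ℕ} (A : Matrix (Fin m) (Fin n) ℝ) (ε : ℕ → ℝ) : Prop :=
  ∀ r : ℕ, 1 ≤ r → r ≤ min m n → ∀ (f : Fin r → Fin m) (g : Fin r → Fin n),
    StrictMono f → StrictMono g → 0 ≤ ε r * (A.submatrix f g).det

/-- The map `f` picks out consecutive indices. -/
def Contig {r m : ℕ} (f : Fin r → Fin m) : Prop :=
  ∃ a : ℕ, ∀ i : Fin r, (f i : ℕ) = a + (i : ℕ)

section CBaux
open Finset

attribute [local instance] Classical.propDecidable

lemma sortFactor {r n : ℕ} (u : Fin r → Fin n) (hu : Function.Injective u) :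
    ∃ (v : Fin r → Fin n) (σ : Equiv.Perm (Fin r)), StrictMono v ∧ u = v ∘ σ := by
  classical
  have hc : (Finset.image u Finset.univ).card = r := by
    rw [Finset.card_image_of_injective _ hu, Finset.card_univ, Fintype.card_fin]
  set s := Finset.image u Finset.univ with hs
  have hmem : ∀ i, u i ∈ s := fun i => Finset.mem_image_of_mem u (Finset.mem_univ i)
  set σ0 : Fin r → Fin r := fun i => (s.orderIsoOfFin hc).symm ⟨u i, hmem i⟩ with hσ0
  have hσ0inj : Function.Injective σ0 := by
    intro i j hij
    have := congrArg (fun x => ((s.orderIsoOfFin hc) x : Fin n)) hij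
    simp only [hσ0, OrderIso.apply_symm_apply] at this
    exact hu this
  have hbij := (Finite.injective_iff_bijective).mp hσ0inj
  refine ⟨s.orderEmbOfFin hc, Equiv.ofBijective σ0 hbij, (s.orderEmbOfFin hc).strictMono, ?_⟩
  funext i
  show u i = s.orderEmbOfFin hc (σ0 i)
  have : (s.orderEmbOfFin hc) (σ0 i) = ((s.orderIsoOfFin hc) (σ0 i) : Fin n) := rfl
  rw [this, hσ0]
  simp only [OrderIso.apply_symm_apply]

lemma sortUnique {r n : ℕ} {v1 v2 : Fin r → Fin n} {σ1 σ2 : Equiv.Perm (Fin r)}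
    (h1 : StrictMono v1) (h2 : StrictMono v2) (h : v1 ∘ σ1 = v2 ∘ σ2) :
    v1 = v2 ∧ σ1 = σ2 := by
  have hr : Set.range v1 = Set.range v2 := by
    rw [← Function.Surjective.range_comp σ1.surjective v1,
      ← Function.Surjective.range_comp σ2.surjective v2, h]
  haveI : WellFoundedLT (Fin r) := inferInstance
  have hv : v1 = v2 := Set.range_injOn_strictMono (β := Fin r) h1 h2 hr
  subst hv
  refine ⟨rfl, Equiv.ext fun i => h1.injective (congrFun h i)⟩

lemma cauchyBinet {r n : ℕ} (A : Matrix (Fin r) (Fin n) ℝ) (C : Matrix (Fin n) (Fin r) ℝ) :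
    (A * C).det = ∑ p ∈ Finset.univ.filter (fun g : Fin r → Fin n => StrictMono g),
      (A.submatrix id p).det * (C.submatrix p id).det := by
  classical
  have step1 : (A * C).det
      = ∑ φ : Fin r → Fin n, (∏ i, A i (φ i)) * (C.submatrix φ id).det := by
    have h1 : (A * C) = Matrix.of (fun i => ∑ t, A i t • C t) := by
      ext i j
      simp [Matrix.mul_apply, Finset.sum_apply]
    rw [h1]
    have : (Matrix.of (fun i => ∑ t, A i t • C t)).det
        = (Matrix.detRowAlternating (R := ℝ) (n := Fin r)).toMultilinearMap
            (fun i => ∑ t, A i t • C t) := rfl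
    rw [this, MultilinearMap.map_sum]
    refine Finset.sum_congr rfl fun φ _ => ?_
    have := MultilinearMap.map_smul_univ
      (Matrix.detRowAlternating (R := ℝ) (n := Fin r)).toMultilinearMap
      (fun i => A i (φ i)) (fun i => C (φ i))
    rw [this]
    rfl
  rw [step1]
  have step2 : ∑ φ : Fin r → Fin n, (∏ i, A i (φ i)) * (C.submatrix φ id).det
      = ∑ φ ∈ Finset.univ.filter (fun φ : Fin r → Fin n => Function.Injective φ),
          (∏ i, A i (φ i)) * (C.submatrix φ id).det := by
    symm
    apply Finset.sum_subset (Finset.filter_subset _ _)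
    intro φ _ hφ
    simp only [Finset.mem_filter, Finset.mem_univ, true_and] at hφ
    rw [Function.Injective] at hφ
    push_neg at hφ
    obtain ⟨i, j, hij, hne⟩ := hφ
    have : (C.submatrix φ id).det = 0 := by
      apply Matrix.det_zero_of_row_eq hne
      funext j'
      simp [Matrix.submatrix_apply, hij]
    rw [this, mul_zero]
  rw [step2]
  -- reindex injective φ by pairs (strictly mono, permutation)
  have step3 : ∑ φ ∈ Finset.univ.filter (fun φ : Fin r → Fin n => Function.Injective φ),
          (∏ i, A i (φ i)) * (C.submatrix φ id).det
      = ∑ p ∈ (Finset.univ.filter (fun g : Fin r → Fin n => StrictMono g)) ×ˢ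
          (Finset.univ : Finset (Equiv.Perm (Fin r))),
          (∏ i, A i (p.1 (p.2 i))) * (C.submatrix (p.1 ∘ p.2) id).det := by
    symm
    refine Finset.sum_bij (fun p _ => p.1 ∘ p.2) ?_ ?_ ?_ ?_
    · rintro ⟨g, σ⟩ hp
      simp only [Finset.mem_product, Finset.mem_filter, Finset.mem_univ, true_and] at hp
      simp only [Finset.mem_filter, Finset.mem_univ, true_and]
      exact hp.1.injective.comp σ.injective
    · rintro ⟨g1, σ1⟩ hp1 ⟨g2, σ2⟩ hp2 h
      simp only [Finset.mem_product, Finset.mem_filter, Finset.mem_univ, true_and] at hp1 hp2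
      obtain ⟨h1, h2⟩ := sortUnique hp1.1 hp2.1 h
      exact Prod.ext h1 h2
    · intro φ hφ
      simp only [Finset.mem_filter, Finset.mem_univ, true_and] at hφ
      obtain ⟨v, σ, hv, huv⟩ := sortFactor φ hφ
      exact ⟨⟨v, σ⟩, by simp [Finset.mem_product, hv], huv.symm⟩
    · rintro ⟨g, σ⟩ _
      rfl
  rw [step3, Finset.sum_product]
  refine Finset.sum_congr rfl fun g hg => ?_
  -- inner sum over permutations gives det of A-submatrix
  have hsub : ∀ σ : Equiv.Perm (Fin r),
      (C.submatrix (g ∘ σ) id) = (C.submatrix g id).submatrix σ id := fun σ => rfl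
  calc ∑ σ : Equiv.Perm (Fin r), (∏ i, A i (g (σ i))) * (C.submatrix (g ∘ σ) id).det
      = ∑ σ : Equiv.Perm (Fin r), (Equiv.Perm.sign σ : ℝ) * (∏ i, (A.submatrix id g)ᵀ (σ i) i)
          * (C.submatrix g id).det := by
        refine Finset.sum_congr rfl fun σ _ => ?_
        rw [hsub σ, Matrix.det_permute]
        have h2 : (∏ i, (A.submatrix id g)ᵀ (σ i) i) = ∏ i, A i (g (σ i)) := rfl
        rw [h2]; ring
    _ = (∑ σ : Equiv.Perm (Fin r), (Equiv.Perm.sign σ : ℝ)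
            * (∏ i, (A.submatrix id g)ᵀ (σ i) i)) * (C.submatrix g id).det := by
        rw [← Finset.sum_mul]
    _ = (A.submatrix id g)ᵀ.det * (C.submatrix g id).det := by
        congr 1
        exact (Matrix.det_apply' _).symm
    _ = (A.submatrix id g).det * (C.submatrix g id).det := by rw [Matrix.det_transpose]

lemma exists_sub_linearIndependent {n r : ℕ} {m : ℕ} (c : Fin n → (Fin m → ℝ))
    (h : r ≤ Module.finrank ℝ (Submodule.span ℝ (Set.range c))) :
    ∃ g : Fin r → Fin n, Function.Injective g ∧ LinearIndependent ℝ (c ∘ g) := by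
  classical
  obtain ⟨b, hbt, hspan, hbi⟩ := exists_linearIndependent ℝ (Set.range c)
  have hbfin : b.Finite := (Set.finite_range c).subset hbt
  haveI : Fintype b := hbfin.fintype
  have hcard : r ≤ Fintype.card b := by
    have h1 : Module.finrank ℝ (Submodule.span ℝ b) = b.toFinset.card :=
      finrank_span_set_eq_card hbi
    have h2 : b.toFinset.card = Fintype.card b := Set.toFinset_card b
    rw [hspan] at h1
    omega
  obtain ⟨e⟩ : Nonempty (Fin r ↪ b) := by
    rw [Function.Embedding.nonempty_iff_card_le, Fintype.card_fin]
    exact hcard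
  have hpre : ∀ x : b, ∃ j : Fin n, c j = (x : Fin m → ℝ) := fun x => hbt x.2
  choose idx hidx using hpre
  refine ⟨fun i => idx (e i), ?_, ?_⟩
  · intro i j hij
    apply e.injective
    apply Subtype.ext
    rw [← hidx (e i), ← hidx (e j)]
    exact congrArg c hij
  · have : c ∘ (fun i => idx (e i)) = (fun x : b => (x : Fin m → ℝ)) ∘ e := by
      funext i; simp [Function.comp, hidx]
    rw [this]
    exact hbi.comp e e.injective

lemma exists_nonzero_minor {n r : ℕ} (A : Matrix (Fin n) (Fin n) ℝ) (h : r ≤ A.rank) :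
    ∃ f g : Fin r → Fin n, StrictMono f ∧ StrictMono g ∧ (A.submatrix f g).det ≠ 0 := by
  classical
  -- choose independent columns
  have hcols : r ≤ Module.finrank ℝ (Submodule.span ℝ (Set.range Aᵀ)) := by
    rw [Matrix.rank_eq_finrank_span_cols] at h; exact h
  obtain ⟨g0, hg0inj, hg0li⟩ := exists_sub_linearIndependent Aᵀ hcols
  -- the n × r matrix with these columns has rank r
  set M0 : Matrix (Fin r) (Fin n) ℝ := Aᵀ.submatrix g0 id with hM0
  have hM0li : LinearIndependent ℝ (fun i => M0 i) := hg0li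
  have hM0rank : M0.rank = r := by
    rw [(show LinearIndependent ℝ M0.row from hM0li).rank_matrix, Fintype.card_fin]
  -- choose independent rows
  have hrows : r ≤ Module.finrank ℝ (Submodule.span ℝ (Set.range M0ᵀ)) := by
    have h' := Matrix.rank_eq_finrank_span_cols M0; rw [hM0rank] at h'; exact h'.le
  obtain ⟨f0, hf0inj, hf0li⟩ := exists_sub_linearIndependent M0ᵀ hrows
  have hD : ((A.submatrix f0 g0)).det ≠ 0 := by
    have hli : LinearIndependent ℝ (fun i => (A.submatrix f0 g0) i) := by
      have : (fun i => (A.submatrix f0 g0) i) = M0ᵀ ∘ f0 := by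
        funext i; funext j; rfl
      rw [this]; exact hf0li
    have := Matrix.linearIndependent_rows_iff_isUnit.mp hli
    rw [Matrix.isUnit_iff_isUnit_det, isUnit_iff_ne_zero] at this
    exact this
  obtain ⟨f1, σ, hf1, hfe⟩ := sortFactor f0 hf0inj
  obtain ⟨g1, τ, hg1, hge⟩ := sortFactor g0 hg0inj
  refine ⟨f1, g1, hf1, hg1, ?_⟩
  intro hzero
  apply hD
  have : A.submatrix f0 g0 = ((A.submatrix f1 g1).submatrix σ id).submatrix id τ := by
    rw [hfe, hge]; rfl
  rw [this, Matrix.det_permute', Matrix.det_permute, hzero]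
  ring

end CBaux

theorem stmt15 {n k : ℕ} (hk : 1 ≤ k) (hkn : k ≤ n) (ε : ℕ → ℝ)
    (hsv : ∀ r, ε r = 1 ∨ ε r = -1)
    (B F : Matrix (Fin n) (Fin n) ℝ)
    (hB : ∀ r : ℕ, 1 ≤ r → r ≤ k → ∀ (f g : Fin r → Fin n),
      StrictMono f → StrictMono g → 0 ≤ ε r * (B.submatrix f g).det)
    (hrank : k ≤ B.rank)
    (hF : ∀ r : ℕ, 1 ≤ r → ∀ (f g : Fin r → Fin n),
      StrictMono f → StrictMono g → 0 < (F.submatrix f g).det) :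
    ∀ r : ℕ, 1 ≤ r → r ≤ k → ∀ (f g : Fin r → Fin n),
      StrictMono f → StrictMono g → 0 < ε r * ((F * B * F).submatrix f g).det := by
  intro r hr hrk f g hf hg
  classical
  set s := Finset.univ.filter (fun u : Fin r → Fin n => StrictMono u) with hsdef
  have key : ((F * B * F).submatrix f g)
      = (F.submatrix f id) * ((B * F).submatrix id g) := by
    rw [mul_assoc]
    exact Matrix.submatrix_mul F (B * F) f id g Function.bijective_id
  have h1 : ((F * B * F).submatrix f g).det
      = ∑ g1 ∈ s, (F.submatrix f g1).det * ((B * F).submatrix g1 g).det := by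
    rw [key, cauchyBinet]
    refine Finset.sum_congr rfl fun g1 _ => ?_
    simp [Matrix.submatrix_submatrix, Function.comp_def]
  have h2 : ∀ g1 : Fin r → Fin n, ((B * F).submatrix g1 g).det
      = ∑ g2 ∈ s, (B.submatrix g1 g2).det * (F.submatrix g2 g).det := by
    intro g1
    rw [Matrix.submatrix_mul B F g1 id g Function.bijective_id, cauchyBinet]
    refine Finset.sum_congr rfl fun g2 _ => ?_
    simp [Matrix.submatrix_submatrix, Function.comp_def]
  have hεd : ε r * ((F * B * F).submatrix f g).det
      = ∑ g1 ∈ s, ∑ g2 ∈ s,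
          (F.submatrix f g1).det * (ε r * (B.submatrix g1 g2).det) * (F.submatrix g2 g).det := by
    rw [h1]
    simp only [h2]
    rw [Finset.mul_sum]
    refine Finset.sum_congr rfl fun g1 _ => ?_
    rw [← mul_assoc, Finset.mul_sum]
    exact Finset.sum_congr rfl fun g2 _ => by ring
  rw [hεd]
  have hmemSM : ∀ {u : Fin r → Fin n}, StrictMono u → u ∈ s := fun hu =>
    Finset.mem_filter.mpr ⟨Finset.mem_univ _, hu⟩
  have hsm : ∀ u ∈ s, StrictMono u := fun u hu => (Finset.mem_filter.mp hu).2
  have hnonneg : ∀ g1 ∈ s, ∀ g2 ∈ s,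
      0 ≤ (F.submatrix f g1).det * (ε r * (B.submatrix g1 g2).det) * (F.submatrix g2 g).det := by
    intro g1 hg1 g2 hg2
    exact mul_nonneg (mul_nonneg (le_of_lt (hF r hr f g1 hf (hsm g1 hg1)))
      (hB r hr hrk g1 g2 (hsm g1 hg1) (hsm g2 hg2))) (le_of_lt (hF r hr g2 g (hsm g2 hg2) hg))
  obtain ⟨f0, g0, hf0, hg0, hd0⟩ := exists_nonzero_minor B (le_trans hrk hrank)
  have hεne : ε r ≠ 0 := by rcases hsv r with h | h <;> simp [h]
  have hpos0 : 0 < ε r * (B.submatrix f0 g0).det :=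
    lt_of_le_of_ne (hB r hr hrk f0 g0 hf0 hg0) (Ne.symm (mul_ne_zero hεne hd0))
  refine Finset.sum_pos' (fun g1 hg1 => Finset.sum_nonneg fun g2 hg2 => hnonneg g1 hg1 g2 hg2)
    ⟨f0, hmemSM hf0, ?_⟩
  refine Finset.sum_pos' (fun g2 hg2 => hnonneg f0 (hmemSM hf0) g2 hg2)
    ⟨g0, hmemSM hg0, ?_⟩
  exact mul_pos (mul_pos (hF r hr f f0 hf hf0) hpos0) (hF r hr g0 g hg0 hg)
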